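/- arXiv:2111.06576 — 2 statements merged into one kernel-verified Lean document; each statement's English description precedes it below -/
import Mathlib

section
/- Let A be an associative unital algebra over a field K, p ≥ 3 odd, q ∈ K a primitive p-th root of unity. Suppose e, k ∈ A with k invertible and k·e = q²·e·k. Then in the algebra A ⊗ A one has (e⊗1 + k⊗e)^p = e^p⊗1 + k^p⊗e^p. -/
open scoped TensorProduct

namespace QBinomAux

variable {K : Type*} [Field K]

/-- Gaussian (q-)binomial coefficients via the q-Pascal recursion. -/
def qb (r : K) : ℕ → ℕ → K
  | 0, 0 => 1
  | 0, _+1 => 0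
  | _+1, 0 => 1
  | n+1, i+1 => qb r n (i+1) + r ^ (n - i) * qb r n i

@[simp] lemma qb_zero_right (r : K) (n : ℕ) : qb r n 0 = 1 := by
  cases n <;> rfl

lemma qb_succ_succ (r : K) (n i : ℕ) :
    qb r (n+1) (i+1) = qb r n (i+1) + r ^ (n - i) * qb r n i := rfl

lemma qb_of_lt (r : K) : ∀ n i : ℕ, n < i → qb r n i = 0 := by
  intro n
  induction n with
  | zero =>
    intro i hi
    obtain ⟨j, rfl⟩ := Nat.exists_eq_add_of_lt hi
    rfl
  | succ n ih =>
    intro i hi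
    obtain ⟨j, rfl⟩ : ∃ j, i = j + 1 := ⟨i - 1, by omega⟩
    rw [qb_succ_succ, ih j (by omega), ih (j+1) (by omega)]
    ring

@[simp] lemma qb_diag (r : K) (n : ℕ) : qb r n n = 1 := by
  induction n with
  | zero => rfl
  | succ n ih =>
    rw [qb_succ_succ, qb_of_lt r n (n+1) (by omega), ih]
    simp

/-- The second Pascal identity for Gaussian binomials. -/
lemma qb_pascal2 (r : K) :
    ∀ n i : ℕ, qb r (n+1) (i+1) = qb r n i + r ^ (i+1) * qb r n (i+1) := by
  intro n
  induction n with
  | zero =>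
    intro i
    cases i with
    | zero => simp [qb]
    | succ m =>
      rw [qb_succ_succ, qb_of_lt r 0 (m+1) (by omega), qb_of_lt r 0 (m+2) (by omega)]
      ring
  | succ n ih =>
    intro i
    cases i with
    | zero =>
      have A := qb_succ_succ r (n+1) 0
      have B := ih 0
      have C := qb_succ_succ r n 0
      simp only [qb_zero_right, Nat.sub_zero] at A B C ⊢
      linear_combination A + B - r * C
    | succ m =>
      rcases le_or_gt (m+1) n with hmn | hmn
      · have A := qb_succ_succ r (n+1) (m+1)
        have B := ih (m+1)
        have C := ih m
        have D := qb_succ_succ r n (m+1)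
        have E := qb_succ_succ r n m
        have h1 : n + 1 - (m + 1) = (n - (m+1)) + 1 := by omega
        have h2 : n - m = (n - (m+1)) + 1 := by omega
        rw [h1] at A
        rw [h2] at E
        linear_combination A + B + r ^ (n - (m+1) + 1) * C - r ^ (m+2) * D - E
      · have hb : qb r (n+1) (m+2) = 0 := qb_of_lt r (n+1) (m+2) (by omega)
        rcases Nat.lt_or_ge n m with h' | h'
        · rw [qb_of_lt r (n+2) (m+2) (by omega), qb_of_lt r (n+1) (m+1) (by omega), hb]
          ring
        · have hm : m = n := by omega
          subst hm
          simp [qb_diag, hb]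

/-- Cross identity: `(r^(i+1) - 1) * qb n (i+1) = (r^(n-i) - 1) * qb n i`. -/
lemma qb_cross (r : K) (n i : ℕ) :
    (r ^ (i+1) - 1) * qb r n (i+1) = (r ^ (n - i) - 1) * qb r n i := by
  have h1 := qb_succ_succ r n i
  have h2 := qb_pascal2 r n i
  linear_combination h1 - h2

/-- Vanishing of Gaussian binomials at a primitive root of unity. -/
lemma qb_vanish (r : K) (p : ℕ) (h1 : r ^ p = 1)
    (h2 : ∀ j, 0 < j → j < p → r ^ j ≠ 1) :
    ∀ i, 0 < i → i < p → qb r p i = 0 := by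
  intro i
  induction i with
  | zero => omega
  | succ i ih =>
    intro _ hip
    have hc := qb_cross r p i
    have hrhs : (r ^ (p - i) - 1) * qb r p i = 0 := by
      rcases Nat.eq_zero_or_pos i with rfl | hi
      · simp [Nat.sub_zero, h1]
      · rw [ih hi (by omega)]
        ring
    rw [hrhs] at hc
    have hne : r ^ (i+1) - 1 ≠ 0 := sub_ne_zero.mpr (h2 (i+1) (by omega) hip)
    rcases mul_eq_zero.mp hc with h | h
    · exact absurd h hne
    · exact h

variable {B : Type*} [Ring B] [Algebra K B]

lemma y_mul_xpow (r : K) (x y : B) (h : y * x = r • (x * y)) (a : ℕ) :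
    y * x ^ a = r ^ a • (x ^ a * y) := by
  induction a with
  | zero => simp
  | succ a ih =>
    calc y * x ^ (a+1) = (y * x) * x ^ a := by rw [pow_succ', ← mul_assoc]
      _ = r • (x * (y * x ^ a)) := by rw [h, smul_mul_assoc, mul_assoc]
      _ = r • (x * (r ^ a • (x ^ a * y))) := by rw [ih]
      _ = r ^ (a+1) • (x ^ (a+1) * y) := by
          rw [mul_smul_comm, smul_smul, ← pow_succ', ← mul_assoc, ← pow_succ']

/-- The q-binomial theorem for `q`-commuting elements. -/
lemma q_binomial (r : K) (x y : B) (h : y * x = r • (x * y)) (n : ℕ) :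
    (x + y) ^ n = ∑ i ∈ Finset.range (n+1), qb r n i • (x ^ (n - i) * y ^ i) := by
  induction n with
  | zero => simp
  | succ n ih =>
    have key : ∀ i ∈ Finset.range (n+1),
        (x + y) * (qb r n i • (x ^ (n - i) * y ^ i))
          = qb r n i • (x ^ (n - i + 1) * y ^ i)
            + (r ^ (n - i) * qb r n i) • (x ^ (n - i) * y ^ (i + 1)) := by
      intro i _
      have h1 : y * (x ^ (n - i) * y ^ i) = r ^ (n - i) • (x ^ (n - i) * y ^ (i + 1)) := by
        rw [← mul_assoc, y_mul_xpow r x y h, smul_mul_assoc, mul_assoc, ← pow_succ']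
      have h2 : x * (x ^ (n - i) * y ^ i) = x ^ (n - i + 1) * y ^ i := by
        rw [← mul_assoc, ← pow_succ']
      rw [add_mul, mul_smul_comm, mul_smul_comm, h1, h2, smul_smul,
        mul_comm (qb r n i) (r ^ (n - i))]
    rw [pow_succ', ih, Finset.mul_sum, Finset.sum_congr rfl key, Finset.sum_add_distrib]
    have split : ∀ i ∈ Finset.range (n+1),
        qb r (n+1) (i+1) • (x ^ (n + 1 - (i+1)) * y ^ (i+1))
          = qb r n (i+1) • (x ^ (n - i) * y ^ (i+1))
            + (r ^ (n - i) * qb r n i) • (x ^ (n - i) * y ^ (i+1)) := by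
      intro i _
      rw [Nat.succ_sub_succ, qb_succ_succ, add_smul]
    rw [Finset.sum_range_succ' (fun i => qb r (n+1) i • (x ^ (n + 1 - i) * y ^ i)) (n+1),
      Finset.sum_congr rfl split, Finset.sum_add_distrib]
    have hA : (∑ i ∈ Finset.range (n+1), qb r n i • (x ^ (n - i + 1) * y ^ i))
        = (∑ i ∈ Finset.range (n+1), qb r n (i+1) • (x ^ (n - i) * y ^ (i+1)))
          + qb r (n+1) 0 • (x ^ (n + 1 - 0) * y ^ 0) := by
      rw [Finset.sum_range_succ' (fun i => qb r n i • (x ^ (n - i + 1) * y ^ i)) n,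
        Finset.sum_range_succ (fun i => qb r n (i+1) • (x ^ (n - i) * y ^ (i+1))) n]
      have last0 : qb r n (n+1) • (x ^ (n - n) * y ^ (n+1)) = 0 := by
        rw [qb_of_lt r n (n+1) (by omega), zero_smul]
      have congr1 : ∀ i ∈ Finset.range n,
          qb r n (i+1) • (x ^ (n - (i+1) + 1) * y ^ (i+1))
            = qb r n (i+1) • (x ^ (n - i) * y ^ (i+1)) := by
        intro i hi
        simp only [Finset.mem_range] at hi
        have : n - (i+1) + 1 = n - i := by omega
        rw [this]
      rw [Finset.sum_congr rfl congr1, last0, add_zero]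
      simp
    rw [hA]
    abel

end QBinomAux

open QBinomAux in
/-- In `A ⊗ A`, `(e⊗1 + k⊗e)^p = e^p⊗1 + k^p⊗e^p` when `k·e = q²·e·k` with `q` a
primitive `p`-th root of unity, `p ≥ 3` odd. -/
theorem coproduct_pth_power {K : Type*} [Field K] {A : Type*} [Ring A] [Algebra K A]
    (p : ℕ) (hp3 : 3 ≤ p) (hpodd : Odd p) (q : K) (hq : IsPrimitiveRoot q p)
    (e k : A) (hk : IsUnit k) (hcomm : k * e = (q ^ 2) • (e * k)) :
    ((e ⊗ₜ[K] (1 : A)) + (k ⊗ₜ[K] e)) ^ p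
      = ((e ^ p) ⊗ₜ[K] (1 : A)) + ((k ^ p) ⊗ₜ[K] (e ^ p)) := by
  set r : K := q ^ 2 with hr_def
  have hr : IsPrimitiveRoot r p := hq.pow_of_coprime 2 hpodd.coprime_two_left
  have h1 : r ^ p = 1 := hr.pow_eq_one
  have h2 : ∀ j, 0 < j → j < p → r ^ j ≠ 1 := fun j hj hjp =>
    hr.pow_ne_one_of_pos_of_lt hj.ne' hjp
  set x : A ⊗[K] A := e ⊗ₜ[K] (1 : A) with hx
  set y : A ⊗[K] A := k ⊗ₜ[K] e with hy
  have hyx : y * x = r • (x * y) := by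
    rw [hx, hy, Algebra.TensorProduct.tmul_mul_tmul, Algebra.TensorProduct.tmul_mul_tmul,
      mul_one, one_mul, hcomm, TensorProduct.smul_tmul']
  rw [q_binomial r x y hyx p, Finset.sum_range_succ]
  have hmain : (∑ i ∈ Finset.range p, qb r p i • (x ^ (p - i) * y ^ i))
      = qb r p 0 • (x ^ (p - 0) * y ^ 0) := by
    refine Finset.sum_eq_single_of_mem 0 (Finset.mem_range.mpr (by omega)) ?_
    intro i hi hne
    rw [qb_vanish r p h1 h2 i (Nat.pos_of_ne_zero hne) (Finset.mem_range.mp hi), zero_smul]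
  rw [hmain, qb_zero_right, qb_diag, one_smul, one_smul, Nat.sub_zero, Nat.sub_self, pow_zero,
    pow_zero, mul_one, one_mul, hx, hy, Algebra.TensorProduct.tmul_pow,
    Algebra.TensorProduct.tmul_pow, one_pow]
end

section
/- Let H be a Hopf algebra over a field K with multiplication μ, comultiplication Δ, counit ε, and antipode S, and let J ∈ H ⊗ H be a Drinfeld twist (an invertible element satisfying (Δ⊗id)(J)(J⊗1) = (id⊗Δ)(J)(1⊗J) and (ε⊗id)(J) = (id⊗ε)(J) = 1). Set U = μ ∘ (S ⊗ id)(J) and V = μ ∘ (id ⊗ S)(J⁻¹). Then U·V = 1 = V·U, i.e. U is invertible with inverse V. -/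
open scoped TensorProduct
open Coalgebra HopfAlgebra TensorProduct LinearMap

private lemma sum3_swap {ι₁ ι₃ M : Type*} {κ : ι₁ → Type*} [AddCommMonoid M]
    (s : Finset ι₁) (S : ∀ i, Finset (κ i)) (t : Finset ι₃)
    (f : ∀ i, κ i → ι₃ → M) :
    ∑ i ∈ s, ∑ k ∈ S i, ∑ l ∈ t, f i k l
      = ∑ l ∈ t, ∑ i ∈ s, ∑ k ∈ S i, f i k l := by
  calc ∑ i ∈ s, ∑ k ∈ S i, ∑ l ∈ t, f i k l
      = ∑ i ∈ s, ∑ l ∈ t, ∑ k ∈ S i, f i k l :=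
        Finset.sum_congr rfl fun i _ => Finset.sum_comm
    _ = _ := Finset.sum_comm

private lemma sum4_swap {ι₁ ι₃ M : Type*} {κ : ι₁ → Type*} {Λ : ι₃ → Type*} [AddCommMonoid M]
    (s : Finset ι₁) (S : ∀ i, Finset (κ i)) (t : Finset ι₃) (T : ∀ j, Finset (Λ j))
    (f : ∀ i, κ i → ∀ j, Λ j → M) :
    ∑ j ∈ t, ∑ l ∈ T j, ∑ i ∈ s, ∑ k ∈ S i, f i k j l
      = ∑ i ∈ s, ∑ k ∈ S i, ∑ j ∈ t, ∑ l ∈ T j, f i k j l := by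
  calc ∑ j ∈ t, ∑ l ∈ T j, ∑ i ∈ s, ∑ k ∈ S i, f i k j l
      = ∑ j ∈ t, ∑ i ∈ s, ∑ l ∈ T j, ∑ k ∈ S i, f i k j l :=
        Finset.sum_congr rfl fun j _ => Finset.sum_comm
    _ = ∑ j ∈ t, ∑ i ∈ s, ∑ k ∈ S i, ∑ l ∈ T j, f i k j l :=
        Finset.sum_congr rfl fun j _ => Finset.sum_congr rfl fun i _ => Finset.sum_comm
    _ = ∑ i ∈ s, ∑ j ∈ t, ∑ k ∈ S i, ∑ l ∈ T j, f i k j l := Finset.sum_comm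
    _ = _ := Finset.sum_congr rfl fun i _ => Finset.sum_comm

section AntiMult
variable {K H : Type*} [CommRing K] [Ring H] [HopfAlgebra K H]


private lemma antipode_one' : (antipode (R := K) (A := H)) 1 = 1 := by
  have h := HopfAlgebra.mul_antipode_rTensor_comul_apply (R := K) (A := H) 1
  rw [Bialgebra.comul_one, Algebra.TensorProduct.one_def] at h
  simpa using h

private lemma repr_sum_counit_right {a : H} (ra : Coalgebra.Repr K a (H × H)) :
    ∑ i ∈ ra.index, counit (R := K) (ra.right i) • ra.left i = a := by
  have h : ∑ i ∈ ra.index,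
      (TensorProduct.rid K H) (ra.left i ⊗ₜ[K] counit (R := K) (ra.right i))
      = (TensorProduct.rid K H) (a ⊗ₜ[K] (1 : K)) := by
    rw [← map_sum, Coalgebra.sum_tmul_counit_eq]
  simpa only [TensorProduct.rid_tmul, one_smul] using h

private lemma repr_sum_counit_left {a : H} (ra : Coalgebra.Repr K a (H × H)) :
    ∑ i ∈ ra.index, counit (R := K) (ra.left i) • ra.right i = a := by
  have h : ∑ i ∈ ra.index,
      (TensorProduct.lid K H) ((counit (R := K) (ra.left i) : K) ⊗ₜ[K] ra.right i)
      = (TensorProduct.lid K H) ((1 : K) ⊗ₜ[K] a) := by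
    rw [← map_sum, Coalgebra.sum_counit_tmul_eq]
  simpa only [TensorProduct.lid_tmul, one_smul] using h

private lemma sum_antipode_mul_mul (u v : H) (ru : Coalgebra.Repr K u (H × H)) (rv : Coalgebra.Repr K v (H × H)) :
    ∑ k ∈ ru.index, ∑ l ∈ rv.index,
      antipode (R := K) (ru.left k * rv.left l) * (ru.right k * rv.right l)
      = (counit (R := K) u * counit (R := K) v) • (1 : H) := by
  have h := HopfAlgebra.mul_antipode_rTensor_comul_apply (R := K) (A := H) (u * v)
  rw [Bialgebra.comul_mul, ← ru.eq, ← rv.eq, Finset.sum_mul_sum] at h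
  simp only [Algebra.TensorProduct.tmul_mul_tmul] at h
  simp only [map_sum, LinearMap.rTensor_tmul, LinearMap.mul'_apply,
    Bialgebra.counit_mul] at h
  rw [h, Algebra.smul_def, mul_one]

private noncomputable def psiMap (p c : H) : H ⊗[K] (H ⊗[K] H) →ₗ[K] H :=
  LinearMap.mul' K H ∘ₗ TensorProduct.map
    ((antipode (R := K)) ∘ₗ LinearMap.mulRight K p)
    (LinearMap.mul' K H ∘ₗ TensorProduct.map LinearMap.id
      (LinearMap.mulLeft K c ∘ₗ (antipode (R := K))))

@[simp] private lemma psiMap_tmul (p c x y z : H) :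
    psiMap (K := K) p c (x ⊗ₜ (y ⊗ₜ z))
      = antipode (R := K) (x * p) * (y * (c * antipode (R := K) z)) := by
  simp [psiMap]

private noncomputable def chiMap (x y z : H) : H ⊗[K] (H ⊗[K] H) →ₗ[K] H :=
  LinearMap.mul' K H ∘ₗ TensorProduct.map
    ((antipode (R := K)) ∘ₗ LinearMap.mulLeft K x)
    (LinearMap.mulLeft K y ∘ₗ LinearMap.mulRight K (antipode (R := K) z)
      ∘ₗ LinearMap.mul' K H ∘ₗ TensorProduct.map LinearMap.id (antipode (R := K)))

@[simp] private lemma chiMap_tmul (x y z p q r : H) :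
    chiMap (K := K) x y z (p ⊗ₜ (q ⊗ₜ r))
      = antipode (R := K) (x * p)
        * (y * ((q * antipode (R := K) r) * antipode (R := K) z)) := by
  simp [chiMap, mul_assoc]

private lemma claimB (a b : H) (ra : Coalgebra.Repr K a (H × H)) (rb : Coalgebra.Repr K b (H × H))
    (ra1 : ∀ i, Coalgebra.Repr K (ra.left i) (H × H))
    (ra2 : ∀ i, Coalgebra.Repr K (ra.right i) (H × H))
    (rb1 : ∀ j, Coalgebra.Repr K (rb.left j) (H × H))
    (rb2 : ∀ j, Coalgebra.Repr K (rb.right j) (H × H)) :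
    (∑ j ∈ rb.index, ∑ i ∈ ra.index, ∑ k ∈ (ra2 i).index, ∑ l ∈ (rb2 j).index,
      antipode (R := K) (ra.left i * rb.left j) *
        ((ra2 i).left k *
          (((rb2 j).left l * antipode (R := K) ((rb2 j).right l))
            * antipode (R := K) ((ra2 i).right k))))
    = antipode (R := K) b * antipode (R := K) a := by
  calc
    -- reorder to j,l,i,k and rewrite as psiMap applied to the a-triple sum
    _ = ∑ j ∈ rb.index, ∑ l ∈ (rb2 j).index,
          psiMap (K := K) (rb.left j)
            ((rb2 j).left l * antipode (R := K) ((rb2 j).right l))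
            (∑ i ∈ ra.index, ∑ k ∈ (ra2 i).index,
              ra.left i ⊗ₜ[K] ((ra2 i).left k ⊗ₜ[K] (ra2 i).right k)) := by
      refine Finset.sum_congr rfl fun j _ => ?_
      rw [sum3_swap ra.index (fun i => (ra2 i).index) (rb2 j).index]
      refine Finset.sum_congr rfl fun l _ => ?_
      rw [map_sum]
      refine Finset.sum_congr rfl fun i _ => ?_
      rw [map_sum]
      exact Finset.sum_congr rfl fun k _ => by rw [psiMap_tmul]
    -- coassociativity on a
    _ = ∑ j ∈ rb.index, ∑ l ∈ (rb2 j).index,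
          psiMap (K := K) (rb.left j)
            ((rb2 j).left l * antipode (R := K) ((rb2 j).right l))
            (∑ i ∈ ra.index, ∑ k ∈ (ra1 i).index,
              (ra1 i).left k ⊗ₜ[K] ((ra1 i).right k ⊗ₜ[K] ra.right i)) := by
      rw [Coalgebra.sum_tmul_tmul_eq ra ra1 ra2]
    -- rewrite via chiMap applied to the b-triple sum (after reordering to i,k,j,l)
    _ = ∑ i ∈ ra.index, ∑ k ∈ (ra1 i).index,
          chiMap (K := K) ((ra1 i).left k) ((ra1 i).right k) (ra.right i)
            (∑ j ∈ rb.index, ∑ l ∈ (rb2 j).index,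
              rb.left j ⊗ₜ[K] ((rb2 j).left l ⊗ₜ[K] (rb2 j).right l)) := by
      have lhs_eq : ∀ j ∈ rb.index, ∀ l ∈ (rb2 j).index,
          psiMap (K := K) (rb.left j)
            ((rb2 j).left l * antipode (R := K) ((rb2 j).right l))
            (∑ i ∈ ra.index, ∑ k ∈ (ra1 i).index,
              (ra1 i).left k ⊗ₜ[K] ((ra1 i).right k ⊗ₜ[K] ra.right i))
          = ∑ i ∈ ra.index, ∑ k ∈ (ra1 i).index,
              chiMap (K := K) ((ra1 i).left k) ((ra1 i).right k) (ra.right i)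
                (rb.left j ⊗ₜ[K] ((rb2 j).left l ⊗ₜ[K] (rb2 j).right l)) := by
        intro j _ l _
        rw [map_sum]
        refine Finset.sum_congr rfl fun i _ => ?_
        rw [map_sum]
        exact Finset.sum_congr rfl fun k _ => by rw [psiMap_tmul, chiMap_tmul]
      calc
        _ = ∑ j ∈ rb.index, ∑ l ∈ (rb2 j).index, ∑ i ∈ ra.index, ∑ k ∈ (ra1 i).index,
              chiMap (K := K) ((ra1 i).left k) ((ra1 i).right k) (ra.right i)
                (rb.left j ⊗ₜ[K] ((rb2 j).left l ⊗ₜ[K] (rb2 j).right l)) :=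
          Finset.sum_congr rfl fun j hj => Finset.sum_congr rfl fun l hl => lhs_eq j hj l hl
        _ = ∑ i ∈ ra.index, ∑ k ∈ (ra1 i).index, ∑ j ∈ rb.index, ∑ l ∈ (rb2 j).index,
              chiMap (K := K) ((ra1 i).left k) ((ra1 i).right k) (ra.right i)
                (rb.left j ⊗ₜ[K] ((rb2 j).left l ⊗ₜ[K] (rb2 j).right l)) :=
          sum4_swap ra.index (fun i => (ra1 i).index) rb.index (fun j => (rb2 j).index) _
        _ = _ := by
          refine Finset.sum_congr rfl fun i _ => Finset.sum_congr rfl fun k _ => ?_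
          rw [map_sum]
          exact Finset.sum_congr rfl fun j _ => (map_sum _ _ _).symm
    -- coassociativity on b
    _ = ∑ i ∈ ra.index, ∑ k ∈ (ra1 i).index,
          chiMap (K := K) ((ra1 i).left k) ((ra1 i).right k) (ra.right i)
            (∑ j ∈ rb.index, ∑ l ∈ (rb1 j).index,
              (rb1 j).left l ⊗ₜ[K] ((rb1 j).right l ⊗ₜ[K] rb.right j)) := by
      rw [Coalgebra.sum_tmul_tmul_eq rb rb1 rb2]
    -- expand, reorder to i,j,k,l and collapse with sum_antipode_mul_mul
    _ = ∑ i ∈ ra.index, ∑ j ∈ rb.index,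
          counit (R := K) (ra.left i) • counit (R := K) (rb.left j) •
            (antipode (R := K) (rb.right j) * antipode (R := K) (ra.right i)) := by
      have expand : ∀ i ∈ ra.index, ∀ k ∈ (ra1 i).index,
          chiMap (K := K) ((ra1 i).left k) ((ra1 i).right k) (ra.right i)
            (∑ j ∈ rb.index, ∑ l ∈ (rb1 j).index,
              (rb1 j).left l ⊗ₜ[K] ((rb1 j).right l ⊗ₜ[K] rb.right j))
          = ∑ j ∈ rb.index, ∑ l ∈ (rb1 j).index,
              (antipode (R := K) ((ra1 i).left k * (rb1 j).left l)
                * ((ra1 i).right k * (rb1 j).right l))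
              * (antipode (R := K) (rb.right j) * antipode (R := K) (ra.right i)) := by
        intro i _ k _
        rw [map_sum]
        refine Finset.sum_congr rfl fun j _ => ?_
        rw [map_sum]
        refine Finset.sum_congr rfl fun l _ => ?_
        rw [chiMap_tmul]
        simp only [mul_assoc]
      calc
        _ = ∑ i ∈ ra.index, ∑ k ∈ (ra1 i).index, ∑ j ∈ rb.index, ∑ l ∈ (rb1 j).index,
              (antipode (R := K) ((ra1 i).left k * (rb1 j).left l)
                * ((ra1 i).right k * (rb1 j).right l))
              * (antipode (R := K) (rb.right j) * antipode (R := K) (ra.right i)) :=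
          Finset.sum_congr rfl fun i hi => Finset.sum_congr rfl fun k hk => expand i hi k hk
        _ = ∑ i ∈ ra.index, ∑ j ∈ rb.index, ∑ k ∈ (ra1 i).index, ∑ l ∈ (rb1 j).index,
              (antipode (R := K) ((ra1 i).left k * (rb1 j).left l)
                * ((ra1 i).right k * (rb1 j).right l))
              * (antipode (R := K) (rb.right j) * antipode (R := K) (ra.right i)) :=
          Finset.sum_congr rfl fun i _ => Finset.sum_comm
        _ = _ := by
          refine Finset.sum_congr rfl fun i _ => Finset.sum_congr rfl fun j _ => ?_
          simp only [← Finset.sum_mul]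
          rw [sum_antipode_mul_mul (ra.left i) (rb.left j) (ra1 i) (rb1 j),
            smul_mul_assoc, one_mul, mul_smul]
    -- final
    _ = antipode (R := K) b * antipode (R := K) a := by
      conv_rhs => rw [← repr_sum_counit_left ra, ← repr_sum_counit_left rb]
      rw [map_sum, map_sum, Finset.sum_mul_sum, Finset.sum_comm]
      refine Finset.sum_congr rfl fun i _ => Finset.sum_congr rfl fun j _ => ?_
      rw [map_smul, map_smul, smul_mul_assoc, mul_smul_comm, smul_comm]

private lemma claimA (a b : H) (ra : Coalgebra.Repr K a (H × H)) (rb : Coalgebra.Repr K b (H × H))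
    (ra2 : ∀ i, Coalgebra.Repr K (ra.right i) (H × H))
    (rb2 : ∀ j, Coalgebra.Repr K (rb.right j) (H × H)) :
    (∑ j ∈ rb.index, ∑ i ∈ ra.index, ∑ k ∈ (ra2 i).index, ∑ l ∈ (rb2 j).index,
      antipode (R := K) (ra.left i * rb.left j) *
        ((ra2 i).left k *
          (((rb2 j).left l * antipode (R := K) ((rb2 j).right l))
            * antipode (R := K) ((ra2 i).right k))))
    = antipode (R := K) (a * b) := by
  have step1 : ∀ j ∈ rb.index, ∀ i ∈ ra.index, ∀ k ∈ (ra2 i).index,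
      ∑ l ∈ (rb2 j).index,
        antipode (R := K) (ra.left i * rb.left j) *
          ((ra2 i).left k *
            (((rb2 j).left l * antipode (R := K) ((rb2 j).right l))
              * antipode (R := K) ((ra2 i).right k)))
      = counit (R := K) (rb.right j) •
          (antipode (R := K) (ra.left i * rb.left j) *
            ((ra2 i).left k * antipode (R := K) ((ra2 i).right k))) := by
    intro j _ i _ k _
    rw [← Finset.mul_sum, ← Finset.mul_sum, ← Finset.sum_mul,
      HopfAlgebra.sum_mul_antipode_eq_smul (rb2 j)]
    simp [smul_mul_assoc, mul_smul_comm]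
  calc
    _ = ∑ j ∈ rb.index, ∑ i ∈ ra.index, ∑ k ∈ (ra2 i).index,
          counit (R := K) (rb.right j) •
            (antipode (R := K) (ra.left i * rb.left j) *
              ((ra2 i).left k * antipode (R := K) ((ra2 i).right k))) := by
        refine Finset.sum_congr rfl fun j hj => Finset.sum_congr rfl fun i hi =>
          Finset.sum_congr rfl fun k hk => step1 j hj i hi k hk
    _ = ∑ j ∈ rb.index, ∑ i ∈ ra.index,
          counit (R := K) (rb.right j) • counit (R := K) (ra.right i) •
            antipode (R := K) (ra.left i * rb.left j) := by
        refine Finset.sum_congr rfl fun j hj => Finset.sum_congr rfl fun i hi => ?_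
        rw [← Finset.smul_sum, ← Finset.mul_sum,
          HopfAlgebra.sum_mul_antipode_eq_smul (ra2 i)]
        simp [mul_smul_comm]
    _ = antipode (R := K) (a * b) := by
        conv_rhs => rw [← repr_sum_counit_right ra, ← repr_sum_counit_right rb]
        rw [Finset.sum_mul_sum, map_sum]
        rw [Finset.sum_comm]
        refine Finset.sum_congr rfl fun j hj => ?_
        rw [map_sum]
        refine Finset.sum_congr rfl fun i hi => ?_
        rw [smul_mul_assoc, mul_smul_comm, map_smul, map_smul, smul_comm]


private lemma antipode_mul_rev (a b : H) :
    antipode (R := K) (a * b) = antipode (R := K) b * antipode (R := K) a := by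
  let ra := Coalgebra.Repr.arbitrary K a
  let rb := Coalgebra.Repr.arbitrary K b
  let ra1 : ∀ i, Coalgebra.Repr K (ra.left i) (H × H) := fun i => Coalgebra.Repr.arbitrary K _
  let ra2 : ∀ i, Coalgebra.Repr K (ra.right i) (H × H) := fun i => Coalgebra.Repr.arbitrary K _
  let rb1 : ∀ j, Coalgebra.Repr K (rb.left j) (H × H) := fun j => Coalgebra.Repr.arbitrary K _
  let rb2 : ∀ j, Coalgebra.Repr K (rb.right j) (H × H) := fun j => Coalgebra.Repr.arbitrary K _
  exact (claimA a b ra rb ra2 rb2).symm.trans (claimB a b ra rb ra1 ra2 rb1 rb2)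

private lemma mul_alg_alg_mul (r s : K) (u v : H) :
    u * algebraMap K H r * algebraMap K H s * v = r • s • (u * v) := by
  rw [Algebra.smul_def, Algebra.smul_def, ← Algebra.commutes r u,
    mul_assoc (algebraMap K H r) u (algebraMap K H s), ← Algebra.commutes s u]
  simp only [mul_assoc]

private noncomputable def PhiM : H ⊗[K] H →ₗ[K] H :=
  LinearMap.mul' K H ∘ₗ TensorProduct.map (antipode (R := K)) LinearMap.id

private noncomputable def PsiM : H ⊗[K] H →ₗ[K] H :=
  LinearMap.mul' K H ∘ₗ TensorProduct.map LinearMap.id (antipode (R := K))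

private noncomputable def TM : H ⊗[K] (H ⊗[K] H) →ₗ[K] H :=
  PhiM ∘ₗ TensorProduct.map LinearMap.id (PsiM (K := K) (H := H))

private noncomputable def T2M : H ⊗[K] (H ⊗[K] H) →ₗ[K] H :=
  LinearMap.mul' K H ∘ₗ TensorProduct.map LinearMap.id (PhiM (K := K) (H := H))

@[simp] private lemma PhiM_tmul (a b : H) :
    PhiM (K := K) (a ⊗ₜ[K] b) = antipode (R := K) a * b := by simp [PhiM]

@[simp] private lemma PsiM_tmul (a b : H) :
    PsiM (K := K) (a ⊗ₜ[K] b) = a * antipode (R := K) b := by simp [PsiM]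

@[simp] private lemma TM_tmul (x y z : H) :
    TM (K := K) (x ⊗ₜ[K] (y ⊗ₜ[K] z))
      = antipode (R := K) x * (y * antipode (R := K) z) := by simp [TM]

@[simp] private lemma T2M_tmul (x y z : H) :
    T2M (K := K) (x ⊗ₜ[K] (y ⊗ₜ[K] z))
      = x * (antipode (R := K) y * z) := by simp [T2M]

private lemma PhiM_comul (a : H) :
    PhiM (K := K) (comul a) = algebraMap K H (counit (R := K) a) :=
  HopfAlgebra.mul_antipode_rTensor_comul_apply a

private lemma PsiM_comul (a : H) :
    PsiM (K := K) (comul a) = algebraMap K H (counit (R := K) a) :=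
  HopfAlgebra.mul_antipode_lTensor_comul_apply a

private lemma lemA (t s : H ⊗[K] H) (b c : H) :
    TM (K := K) ((TensorProduct.assoc K H H H) (t ⊗ₜ[K] b) * (c ⊗ₜ[K] s))
      = antipode (R := K) c * PhiM (K := K) t * PsiM (K := K) s * antipode (R := K) b := by
  induction t using TensorProduct.induction_on with
  | zero => simp [zero_tmul, zero_mul, mul_zero]
  | add t₁ t₂ h₁ h₂ => simp only [add_tmul, map_add, add_mul, mul_add, h₁, h₂]
  | tmul p q =>
    induction s using TensorProduct.induction_on with
    | zero => simp [mul_zero, zero_mul]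
    | add s₁ s₂ h₁ h₂ => simp only [tmul_add, map_add, add_mul, mul_add, h₁, h₂]
    | tmul u v =>
      rw [TensorProduct.assoc_tmul]
      simp only [Algebra.TensorProduct.tmul_mul_tmul, TM_tmul, PhiM_tmul, PsiM_tmul]
      simp [antipode_mul_rev, mul_assoc]

private lemma lemA2 (t s : H ⊗[K] H) (a d : H) :
    T2M (K := K) ((a ⊗ₜ[K] s) * (TensorProduct.assoc K H H H) (t ⊗ₜ[K] d))
      = a * PsiM (K := K) t * PhiM (K := K) s * d := by
  induction t using TensorProduct.induction_on with
  | zero => simp [zero_tmul, zero_mul, mul_zero]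
  | add t₁ t₂ h₁ h₂ => simp only [add_tmul, map_add, add_mul, mul_add, h₁, h₂]
  | tmul p q =>
    induction s using TensorProduct.induction_on with
    | zero => simp [mul_zero, zero_mul]
    | add s₁ s₂ h₁ h₂ => simp only [tmul_add, map_add, add_mul, mul_add, h₁, h₂]
    | tmul u v =>
      rw [TensorProduct.assoc_tmul]
      simp only [Algebra.TensorProduct.tmul_mul_tmul, T2M_tmul, PhiM_tmul, PsiM_tmul]
      simp [antipode_mul_rev, mul_assoc]

private noncomputable def AAh : H ⊗[K] H →ₐ[K] H ⊗[K] (H ⊗[K] H) :=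
  (Algebra.TensorProduct.assoc K K K H H H).toAlgHom.comp
    (Algebra.TensorProduct.map (Bialgebra.comulAlgHom K H) (AlgHom.id K H))

private noncomputable def BBh : H ⊗[K] H →ₐ[K] H ⊗[K] (H ⊗[K] H) :=
  Algebra.TensorProduct.map (AlgHom.id K H) (Bialgebra.comulAlgHom K H)

private noncomputable def iLh : H ⊗[K] H →ₐ[K] H ⊗[K] (H ⊗[K] H) :=
  (Algebra.TensorProduct.assoc K K K H H H).toAlgHom.comp Algebra.TensorProduct.includeLeft

private noncomputable def incRh : H ⊗[K] H →ₐ[K] H ⊗[K] (H ⊗[K] H) :=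
  Algebra.TensorProduct.includeRight

private noncomputable def PAh : H ⊗[K] H →ₐ[K] H :=
  (Algebra.TensorProduct.lid K H).toAlgHom.comp
    (Algebra.TensorProduct.map (Bialgebra.counitAlgHom K H) (AlgHom.id K H))

private noncomputable def QAh : H ⊗[K] H →ₐ[K] H :=
  (Algebra.TensorProduct.rid K K H).toAlgHom.comp
    (Algebra.TensorProduct.map (AlgHom.id K H) (Bialgebra.counitAlgHom K H))

private lemma QAh_eq (x : H ⊗[K] H) :
    QAh (K := K) x
      = TensorProduct.rid K H (TensorProduct.map LinearMap.id (counit (R := K)) x) := by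
  show Algebra.TensorProduct.rid K K H
      (TensorProduct.map LinearMap.id (counit (R := K)) x) = _
  induction (TensorProduct.map LinearMap.id (counit (R := K)) x) using
    TensorProduct.induction_on with
  | zero => simp
  | tmul a c => simp [Algebra.TensorProduct.rid_tmul]
  | add u v hu hv => simp [hu, hv]

private lemma C1 (x y : H ⊗[K] H) :
    TM (K := K) (AAh (K := K) x * BBh (K := K) y)
      = antipode (R := K) (PAh (K := K) x * QAh (K := K) y) := by
  induction x using TensorProduct.induction_on with
  | zero => simp [map_zero, zero_mul]
  | add x₁ x₂ h₁ h₂ => simp only [map_add, add_mul, h₁, h₂, mul_add]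
  | tmul a b =>
    induction y using TensorProduct.induction_on with
    | zero => simp [map_zero, mul_zero]
    | add y₁ y₂ h₁ h₂ => simp only [map_add, mul_add, h₁, h₂, add_mul]
    | tmul c d =>
      have h1 : AAh (K := K) (a ⊗ₜ[K] b)
          = (TensorProduct.assoc K H H H) ((comul (R := K) a) ⊗ₜ[K] b) := rfl
      have h2 : BBh (K := K) (c ⊗ₜ[K] d) = c ⊗ₜ[K] (comul (R := K) d) := rfl
      have h3 : PAh (K := K) (a ⊗ₜ[K] b) = counit (R := K) a • b := by
        show (TensorProduct.lid K H) ((counit (R := K) a : K) ⊗ₜ[K] b) = _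
        simp
      have h4 : QAh (K := K) (c ⊗ₜ[K] d) = counit (R := K) d • c := by
        rw [QAh_eq]; simp
      rw [h1, h2, lemA (comul a) (comul d) b c, PhiM_comul, PsiM_comul, h3, h4,
        mul_alg_alg_mul, smul_mul_assoc, mul_smul_comm, map_smul, map_smul,
        antipode_mul_rev]

private lemma C1' (x y : H ⊗[K] H) :
    TM (K := K) (iLh (K := K) x * incRh (K := K) y)
      = PhiM (K := K) x * PsiM (K := K) y := by
  have h1 : iLh (K := K) x = (TensorProduct.assoc K H H H) (x ⊗ₜ[K] (1 : H)) := rfl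
  have h2 : incRh (K := K) y = (1 : H) ⊗ₜ[K] y := rfl
  rw [h1, h2, lemA x y 1 1, antipode_one', one_mul, mul_one]

private lemma C2 (x y : H ⊗[K] H) :
    T2M (K := K) (BBh (K := K) x * AAh (K := K) y)
      = QAh (K := K) x * PAh (K := K) y := by
  induction x using TensorProduct.induction_on with
  | zero => simp [map_zero, zero_mul]
  | add x₁ x₂ h₁ h₂ => simp only [map_add, add_mul, h₁, h₂]
  | tmul a b =>
    induction y using TensorProduct.induction_on with
    | zero => simp [map_zero, mul_zero]
    | add y₁ y₂ h₁ h₂ => simp only [map_add, mul_add, h₁, h₂]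
    | tmul c d =>
      have h1 : AAh (K := K) (c ⊗ₜ[K] d)
          = (TensorProduct.assoc K H H H) ((comul (R := K) c) ⊗ₜ[K] d) := rfl
      have h2 : BBh (K := K) (a ⊗ₜ[K] b) = a ⊗ₜ[K] (comul (R := K) b) := rfl
      have h3 : PAh (K := K) (c ⊗ₜ[K] d) = counit (R := K) c • d := by
        show (TensorProduct.lid K H) ((counit (R := K) c : K) ⊗ₜ[K] d) = _
        simp
      have h4 : QAh (K := K) (a ⊗ₜ[K] b) = counit (R := K) b • a := by
        rw [QAh_eq]; simp
      rw [h1, h2, lemA2 (comul c) (comul b) a d, PsiM_comul, PhiM_comul, h3, h4,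
        mul_alg_alg_mul, smul_mul_assoc, mul_smul_comm, smul_comm]

private lemma C2' (x y : H ⊗[K] H) :
    T2M (K := K) (incRh (K := K) y * iLh (K := K) x)
      = PsiM (K := K) x * PhiM (K := K) y := by
  have h1 : iLh (K := K) x = (TensorProduct.assoc K H H H) (x ⊗ₜ[K] (1 : H)) := rfl
  have h2 : incRh (K := K) y = (1 : H) ⊗ₜ[K] y := rfl
  rw [h1, h2, lemA2 x y 1 1, one_mul, mul_one]


private lemma AAh_apply (x : H ⊗[K] H) :
    AAh (K := K) x
      = (TensorProduct.assoc K H H H)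
          ((TensorProduct.map (comul (R := K)) LinearMap.id) x) := rfl

private lemma BBh_apply (x : H ⊗[K] H) :
    BBh (K := K) x = (TensorProduct.map LinearMap.id (comul (R := K))) x := rfl

private lemma iLh_apply (x : H ⊗[K] H) :
    iLh (K := K) x = (TensorProduct.assoc K H H H) (x ⊗ₜ[K] (1 : H)) := rfl

private lemma incRh_apply (x : H ⊗[K] H) :
    incRh (K := K) x = (1 : H) ⊗ₜ[K] x := rfl

private lemma PAh_apply (x : H ⊗[K] H) :
    PAh (K := K) x
      = (TensorProduct.lid K H)
          ((TensorProduct.map (counit (R := K)) LinearMap.id) x) := rfl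

private lemma PhiM_def (x : H ⊗[K] H) :
    PhiM (K := K) x
      = LinearMap.mul' K H ((TensorProduct.map (antipode (R := K)) LinearMap.id) x) := rfl

private lemma PsiM_def (x : H ⊗[K] H) :
    PsiM (K := K) x
      = LinearMap.mul' K H ((TensorProduct.map LinearMap.id (antipode (R := K))) x) := rfl

private lemma assocL_mul (u v : (H ⊗[K] H) ⊗[K] H) :
    (TensorProduct.assoc K H H H) (u * v)
      = (TensorProduct.assoc K H H H) u * (TensorProduct.assoc K H H H) v :=
  map_mul (Algebra.TensorProduct.assoc K K K H H H) u v


end AntiMult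


set_option maxHeartbeats 3200000 in
/-- For a Drinfeld twist `J` with inverse `J'`, the element `U = μ∘(S⊗id)(J)` is
invertible with inverse `V = μ∘(id⊗S)(J⁻¹)`. -/
theorem twist_element_invertible {K H : Type*} [CommRing K] [Ring H]
    [HopfAlgebra K H] (J J' : H ⊗[K] H) (hJJ' : J * J' = 1) (hJ'J : J' * J = 1)
    (hcocycle :
      (TensorProduct.assoc K H H H)
          ((TensorProduct.map comul LinearMap.id) J * (J ⊗ₜ[K] (1 : H)))
        = (TensorProduct.map LinearMap.id comul) J * ((1 : H) ⊗ₜ[K] J))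
    (hnorm₁ : (TensorProduct.lid K H) ((TensorProduct.map counit LinearMap.id) J) = 1)
    (hnorm₂ : (TensorProduct.rid K H) ((TensorProduct.map LinearMap.id counit) J) = 1)
    (U V : H)
    (hU : U = LinearMap.mul' K H ((TensorProduct.map (antipode K) LinearMap.id) J))
    (hV : V = LinearMap.mul' K H ((TensorProduct.map LinearMap.id (antipode K)) J')) :
    U * V = 1 ∧ V * U = 1 := by
  -- restate the cocycle condition via algebra homomorphisms
  have hco : AAh (K := K) J * iLh (K := K) J = BBh (K := K) J * incRh (K := K) J := by
    rw [AAh_apply, iLh_apply, BBh_apply, incRh_apply, ← assocL_mul]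
    exact hcocycle
  have hAA1 : AAh (K := K) J' * AAh (K := K) J = 1 := by
    rw [← map_mul, hJ'J, map_one]
  have hBB1 : BBh (K := K) J' * BBh (K := K) J = 1 := by
    rw [← map_mul, hJ'J, map_one]
  have hiL1 : iLh (K := K) J * iLh (K := K) J' = 1 := by
    rw [← map_mul, hJJ', map_one]
  have hincR1 : incRh (K := K) J * incRh (K := K) J' = 1 := by
    rw [← map_mul, hJJ', map_one]
  -- the two rearranged equations
  have E1 : iLh (K := K) J * incRh (K := K) J' = AAh (K := K) J' * BBh (K := K) J := by
    calc iLh (K := K) J * incRh (K := K) J'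
        = (AAh (K := K) J' * AAh (K := K) J) * iLh (K := K) J * incRh (K := K) J' := by
          rw [hAA1, one_mul]
      _ = AAh (K := K) J' * (AAh (K := K) J * iLh (K := K) J) * incRh (K := K) J' := by
          rw [mul_assoc (AAh (K := K) J') (AAh (K := K) J) (iLh (K := K) J)]
      _ = AAh (K := K) J' * (BBh (K := K) J * incRh (K := K) J) * incRh (K := K) J' := by
          rw [hco]
      _ = AAh (K := K) J' * BBh (K := K) J * (incRh (K := K) J * incRh (K := K) J') := by
          simp only [mul_assoc]
      _ = AAh (K := K) J' * BBh (K := K) J := by rw [hincR1, mul_one]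
  have E2 : incRh (K := K) J * iLh (K := K) J' = BBh (K := K) J' * AAh (K := K) J := by
    calc incRh (K := K) J * iLh (K := K) J'
        = (BBh (K := K) J' * BBh (K := K) J) * incRh (K := K) J * iLh (K := K) J' := by
          rw [hBB1, one_mul]
      _ = BBh (K := K) J' * (BBh (K := K) J * incRh (K := K) J) * iLh (K := K) J' := by
          rw [mul_assoc (BBh (K := K) J') (BBh (K := K) J) (incRh (K := K) J)]
      _ = BBh (K := K) J' * (AAh (K := K) J * iLh (K := K) J) * iLh (K := K) J' := by
          rw [← hco]
      _ = BBh (K := K) J' * AAh (K := K) J * (iLh (K := K) J * iLh (K := K) J') := by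
          simp only [mul_assoc]
      _ = BBh (K := K) J' * AAh (K := K) J := by rw [hiL1, mul_one]
  -- normalization
  have hPJ : PAh (K := K) J = 1 := by rw [PAh_apply]; exact hnorm₁
  have hQJ : QAh (K := K) J = 1 := by rw [QAh_eq]; exact hnorm₂
  have hPJ' : PAh (K := K) J' = 1 := by
    have h := map_mul (PAh (K := K) (H := H)) J' J
    rw [hJ'J, map_one, hPJ, mul_one] at h
    exact h.symm
  have hQJ' : QAh (K := K) J' = 1 := by
    have h := map_mul (QAh (K := K) (H := H)) J' J
    rw [hJ'J, map_one, hQJ, mul_one] at h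
    exact h.symm
  have hUP : U = PhiM (K := K) J := by rw [hU, PhiM_def]
  have hVP : V = PsiM (K := K) J' := by rw [hV, PsiM_def]
  constructor
  · calc U * V = PhiM (K := K) J * PsiM (K := K) J' := by rw [hUP, hVP]
      _ = TM (K := K) (iLh (K := K) J * incRh (K := K) J') := (C1' J J').symm
      _ = TM (K := K) (AAh (K := K) J' * BBh (K := K) J) := by rw [E1]
      _ = antipode (R := K) (PAh (K := K) J' * QAh (K := K) J) := C1 J' J
      _ = 1 := by rw [hPJ', hQJ, one_mul, antipode_one']
  · calc V * U = PsiM (K := K) J' * PhiM (K := K) J := by rw [hUP, hVP]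
      _ = T2M (K := K) (incRh (K := K) J * iLh (K := K) J') := (C2' J' J).symm
      _ = T2M (K := K) (BBh (K := K) J' * AAh (K := K) J) := by rw [E2]
      _ = QAh (K := K) J' * PAh (K := K) J := C2 J' J
      _ = 1 := by rw [hQJ', hPJ, one_mul]
end
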